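/- arXiv:2409.00243 — 3 statements merged into one kernel-verified Lean document; each statement's English description precedes it below -/
import Mathlib

section
/- Let c_e be continuous and nondecreasing cost functions on each edge e of a network. If (y, x) with multipliers (ν, λ, μ) is a Wardrop equilibrium for demand vector d, and (y', x') with multipliers (ν', λ', μ') is a Wardrop equilibrium for demand vector d', where the multipliers satisfy the KKT conditions c_e(x_e) = λ_e, ν_θ = Σ_{e∈E} λ_e a_{e,s} − μ_{θ,i} for every path s_{θ,i}, and complementary slackness μ_{θ,i} y_{θ,i} = 0 with all μ, y nonnegative, then (ν' − ν)ᵀ(d' − d) ≥ μ'ᵀ y + μᵀ y' ≥ 0. -/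
open Finset

/-- Demand-sensitivity of Wardrop equilibria (Proposition 2):
`(ν' − ν)ᵀ(d' − d) ≥ μ'ᵀ y + μᵀ y' ≥ 0`. -/
theorem wardrop_demand_sensitivity
    {Θ E P : Type*} [Fintype Θ] [DecidableEq Θ] [Fintype E] [Fintype P]
    (od : P → Θ) (a : E → P → ℝ)
    (ha : ∀ e p, a e p = 0 ∨ a e p = 1)
    (c : E → ℝ → ℝ)
    (hc_cont : ∀ e, Continuous (c e))
    (hc_mono : ∀ e, Monotone (c e))
    (d d' : Θ → ℝ)
    (y y' : P → ℝ)
    (hy : ∀ p, 0 ≤ y p) (hy' : ∀ p, 0 ≤ y' p)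
    (hfeas : ∀ θ, ∑ p, (if od p = θ then y p else 0) = d θ)
    (hfeas' : ∀ θ, ∑ p, (if od p = θ then y' p else 0) = d' θ)
    (x x' : E → ℝ)
    (hx : ∀ e, x e = ∑ p, a e p * y p)
    (hx' : ∀ e, x' e = ∑ p, a e p * y' p)
    (ν ν' : Θ → ℝ) (lam lam' : E → ℝ) (μ μ' : P → ℝ)
    (hμ : ∀ p, 0 ≤ μ p) (hμ' : ∀ p, 0 ≤ μ' p)
    (hKKT1 : ∀ e, c e (x e) = lam e)
    (hKKT1' : ∀ e, c e (x' e) = lam' e)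
    (hKKT2 : ∀ p, ν (od p) = (∑ e, lam e * a e p) - μ p)
    (hKKT2' : ∀ p, ν' (od p) = (∑ e, lam' e * a e p) - μ' p)
    (hKKT3 : ∀ p, μ p * y p = 0)
    (hKKT3' : ∀ p, μ' p * y' p = 0) :
    (∑ θ, (ν' θ - ν θ) * (d' θ - d θ)) ≥ (∑ p, μ' p * y p) + (∑ p, μ p * y' p) ∧
    (∑ p, μ' p * y p) + (∑ p, μ p * y' p) ≥ 0 := by
  have per : ∀ p, (ν' (od p) - ν (od p)) * (y' p - y p)
      = (∑ e, (lam' e - lam e) * a e p) * (y' p - y p)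
        + (μ' p * y p + μ p * y' p) := by
    intro p
    have hAB : ∑ e, (lam' e - lam e) * a e p
        = (∑ e, lam' e * a e p) - (∑ e, lam e * a e p) := by
      rw [← Finset.sum_sub_distrib]
      exact Finset.sum_congr rfl fun e _ => by ring
    rw [hKKT2, hKKT2', hAB]
    linear_combination (-1 : ℝ) * hKKT3' p - hKKT3 p
  have key : ∑ θ, (ν' θ - ν θ) * (d' θ - d θ)
      = ∑ p, (ν' (od p) - ν (od p)) * (y' p - y p) := by
    simp_rw [← hfeas, ← hfeas', ← Finset.sum_sub_distrib, Finset.mul_sum]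
    rw [Finset.sum_comm]
    refine Finset.sum_congr rfl fun p _ => ?_
    rw [Finset.sum_eq_single (od p)]
    · simp
    · intro b _ hb; simp [Ne.symm hb]
    · simp
  have swap : ∑ p, (∑ e, (lam' e - lam e) * a e p) * (y' p - y p)
      = ∑ e, (lam' e - lam e) * (x' e - x e) := by
    simp_rw [hx, hx', ← Finset.sum_sub_distrib, Finset.mul_sum, Finset.sum_mul]
    rw [Finset.sum_comm]
    exact Finset.sum_congr rfl fun e _ => Finset.sum_congr rfl fun p _ => by ring
  have hedge : 0 ≤ ∑ e, (lam' e - lam e) * (x' e - x e) := by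
    refine Finset.sum_nonneg fun e _ => ?_
    rw [← hKKT1, ← hKKT1']
    rcases le_total (x e) (x' e) with h | h
    · exact mul_nonneg (sub_nonneg.2 (hc_mono e h)) (sub_nonneg.2 h)
    · exact mul_nonneg_of_nonpos_of_nonpos (sub_nonpos.2 (hc_mono e h))
        (sub_nonpos.2 h)
  have hsum : ∑ θ, (ν' θ - ν θ) * (d' θ - d θ)
      = (∑ e, (lam' e - lam e) * (x' e - x e))
        + ((∑ p, μ' p * y p) + (∑ p, μ p * y' p)) := by
    rw [key]
    simp_rw [per]
    rw [Finset.sum_add_distrib, swap, Finset.sum_add_distrib]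
  have hnn : 0 ≤ (∑ p, μ' p * y p) + (∑ p, μ p * y' p) :=
    add_nonneg (Finset.sum_nonneg fun p _ => mul_nonneg (hμ' p) (hy p))
      (Finset.sum_nonneg fun p _ => mul_nonneg (hμ p) (hy' p))
  exact ⟨by rw [hsum]; linarith, hnn⟩
end

section
/- Monotonicity of equilibrium costs in demand (scalar consequence): under the hypotheses of the demand-sensitivity proposition, for any OD pair θ and any path s_{θ,i} used in both equilibria (y_{θ,i} > 0 and y'_{θ,i} > 0), if only the demand of OD pair θ changes (d'_{θ'} = d_{θ'} for all θ' ≠ θ), then [Σ_{e ∈ s_{θ,i}} (c_e(x'_e) − c_e(x_e))] · (d'_θ − d_θ) ≥ 0. -/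
open Finset

/-- Scalar consequence of demand sensitivity: for a path used in both equilibria,
if only the demand of OD pair `θ₀` changes, then
`[Σ_{e ∈ s} (c_e(x'_e) − c_e(x_e))] · (d'_{θ₀} − d_{θ₀}) ≥ 0`. -/
theorem wardrop_demand_sensitivity_scalar
    {Θ E P : Type*} [Fintype Θ] [DecidableEq Θ] [Fintype E] [Fintype P]
    (od : P → Θ) (a : E → P → ℝ)
    (ha : ∀ e p, a e p = 0 ∨ a e p = 1)
    (c : E → ℝ → ℝ)
    (hc_cont : ∀ e, Continuous (c e))
    (hc_mono : ∀ e, Monotone (c e))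
    (d d' : Θ → ℝ)
    (y y' : P → ℝ)
    (hy : ∀ p, 0 ≤ y p) (hy' : ∀ p, 0 ≤ y' p)
    (hfeas : ∀ θ, ∑ p, (if od p = θ then y p else 0) = d θ)
    (hfeas' : ∀ θ, ∑ p, (if od p = θ then y' p else 0) = d' θ)
    (x x' : E → ℝ)
    (hx : ∀ e, x e = ∑ p, a e p * y p)
    (hx' : ∀ e, x' e = ∑ p, a e p * y' p)
    (ν ν' : Θ → ℝ) (lam lam' : E → ℝ) (μ μ' : P → ℝ)
    (hμ : ∀ p, 0 ≤ μ p) (hμ' : ∀ p, 0 ≤ μ' p)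
    (hKKT1 : ∀ e, c e (x e) = lam e)
    (hKKT1' : ∀ e, c e (x' e) = lam' e)
    (hKKT2 : ∀ p, ν (od p) = (∑ e, lam e * a e p) - μ p)
    (hKKT2' : ∀ p, ν' (od p) = (∑ e, lam' e * a e p) - μ' p)
    (hKKT3 : ∀ p, μ p * y p = 0)
    (hKKT3' : ∀ p, μ' p * y' p = 0)
    (θ₀ : Θ) (p₀ : P) (hod : od p₀ = θ₀)
    (hused : 0 < y p₀) (hused' : 0 < y' p₀)
    (honly : ∀ θ, θ ≠ θ₀ → d' θ = d θ) :
    (∑ e, a e p₀ * (c e (x' e) - c e (x e))) * (d' θ₀ - d θ₀) ≥ 0 := by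

  -- μ vanishes on the used path in both equilibria
  have hμ0 : μ p₀ = 0 := by
    rcases mul_eq_zero.mp (hKKT3 p₀) with h | h
    · exact h
    · exact absurd h (ne_of_gt hused)
  have hμ0' : μ' p₀ = 0 := by
    rcases mul_eq_zero.mp (hKKT3' p₀) with h | h
    · exact h
    · exact absurd h (ne_of_gt hused')
  -- the LHS sum equals ν' θ₀ - ν θ₀
  have hsum : (∑ e, a e p₀ * (c e (x' e) - c e (x e))) = ν' θ₀ - ν θ₀ := by
    have h2 := hKKT2 p₀
    have h2' := hKKT2' p₀
    rw [hod] at h2 h2'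
    have : (∑ e, a e p₀ * (c e (x' e) - c e (x e)))
        = (∑ e, lam' e * a e p₀) - (∑ e, lam e * a e p₀) := by
      rw [← Finset.sum_sub_distrib]
      apply Finset.sum_congr rfl
      intro e _
      rw [hKKT1, hKKT1']; ring
    rw [this]; rw [h2, h2', hμ0, hμ0']; ring
  rw [hsum]
  -- monotonicity gives the variational inequality
  have hA : 0 ≤ ∑ e, (lam' e - lam e) * (x' e - x e) := by
    apply Finset.sum_nonneg
    intro e _
    rw [← hKKT1, ← hKKT1']
    rcases le_total (x e) (x' e) with h | h
    · exact mul_nonneg (sub_nonneg.mpr (hc_mono e h)) (sub_nonneg.mpr h)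
    · have h1 := sub_nonpos.mpr (hc_mono e h)
      nlinarith
  have key : ∀ p, (∑ e, (lam' e - lam e) * a e p)
      = (ν' (od p) + μ' p) - (ν (od p) + μ p) := by
    intro p
    have h2 := hKKT2 p
    have h2' := hKKT2' p
    have hsplit : (∑ e, (lam' e - lam e) * a e p)
        = (∑ e, lam' e * a e p) - (∑ e, lam e * a e p) := by
      rw [← Finset.sum_sub_distrib]
      apply Finset.sum_congr rfl
      intros; ring
    rw [hsplit]; linarith
  have hB : (∑ e, (lam' e - lam e) * (x' e - x e))
      = ∑ p, ((ν' (od p) + μ' p) - (ν (od p) + μ p)) * (y' p - y p) := by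
    calc (∑ e, (lam' e - lam e) * (x' e - x e))
        = ∑ e, ∑ p, (lam' e - lam e) * a e p * (y' p - y p) := by
          apply Finset.sum_congr rfl
          intro e _
          rw [hx, hx', ← Finset.sum_sub_distrib, Finset.mul_sum]
          apply Finset.sum_congr rfl
          intros; ring
      _ = ∑ p, ∑ e, (lam' e - lam e) * a e p * (y' p - y p) := Finset.sum_comm
      _ = ∑ p, (∑ e, (lam' e - lam e) * a e p) * (y' p - y p) := by
          apply Finset.sum_congr rfl
          intro p _
          rw [Finset.sum_mul]
      _ = ∑ p, ((ν' (od p) + μ' p) - (ν (od p) + μ p)) * (y' p - y p) := by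
          apply Finset.sum_congr rfl
          intro p _
          rw [key]
  have hsplit2 : (∑ p, ((ν' (od p) + μ' p) - (ν (od p) + μ p)) * (y' p - y p))
      = (∑ p, (ν' (od p) - ν (od p)) * (y' p - y p))
        + (∑ p, (μ' p - μ p) * (y' p - y p)) := by
    rw [← Finset.sum_add_distrib]
    apply Finset.sum_congr rfl
    intros; ring
  have hC : (∑ p, (ν' (od p) - ν (od p)) * (y' p - y p))
      = (ν' θ₀ - ν θ₀) * (d' θ₀ - d θ₀) := by
    calc (∑ p, (ν' (od p) - ν (od p)) * (y' p - y p))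
        = ∑ p, ∑ θ, (if od p = θ then (ν' θ - ν θ) * (y' p - y p) else 0) := by
          apply Finset.sum_congr rfl
          intro p _
          simp
      _ = ∑ θ, ∑ p, (if od p = θ then (ν' θ - ν θ) * (y' p - y p) else 0) :=
          Finset.sum_comm
      _ = ∑ θ, (ν' θ - ν θ) * (d' θ - d θ) := by
          apply Finset.sum_congr rfl
          intro θ _
          rw [← hfeas, ← hfeas', ← Finset.sum_sub_distrib, Finset.mul_sum]
          apply Finset.sum_congr rfl
          intro p _
          by_cases h : od p = θ <;> simp [h]
      _ = (ν' θ₀ - ν θ₀) * (d' θ₀ - d θ₀) := by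
          rw [Finset.sum_eq_single θ₀]
          · intro θ _ hθ
            rw [honly θ hθ]; ring
          · intro h
            exact absurd (Finset.mem_univ θ₀) h
  have hD : (∑ p, (μ' p - μ p) * (y' p - y p)) ≤ 0 := by
    apply Finset.sum_nonpos
    intro p _
    have h3 := hKKT3 p
    have h3' := hKKT3' p
    have h1 : 0 ≤ μ' p * y p := mul_nonneg (hμ' p) (hy p)
    have h2 : 0 ≤ μ p * y' p := mul_nonneg (hμ p) (hy' p)
    nlinarith
  rw [hB, hsplit2, hC] at hA
  linarith
end

section
/- Existence and uniqueness of equilibrium edge loads: if each edge cost c_e : ℝ_{≥0} → ℝ is continuous and strictly increasing, then the Beckmann potential Φ(y) = Σ_e ∫₀^{x_e(y)} c_e(z) dz, minimized over the compact convex polytope of feasible path flows {y : y_{θ,i} ≥ 0, Σ_i y_{θ,i} = d_θ}, attains its minimum, and any two minimizers y, y' induce the same edge loads: x_e(y) = x_e(y') for every edge e. -/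
open Finset

/-- Existence and uniqueness of equilibrium edge loads: the Beckmann potential
attains its minimum over the feasible path-flow polytope, and any two minimizers
induce the same edge loads. -/
theorem beckmann_exists_unique_loads
    {Θ E P : Type*} [Fintype Θ] [DecidableEq Θ] [Fintype E] [Fintype P]
    (od : P → Θ) (a : E → P → ℝ)
    (ha : ∀ e p, a e p = 0 ∨ a e p = 1)
    (d : Θ → ℝ) (hd : ∀ θ, 0 ≤ d θ)
    (c : E → ℝ → ℝ)
    (hc_cont : ∀ e, Continuous (c e))
    (hc_mono : ∀ e, StrictMono (c e))
    (K : Set (P → ℝ))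
    (hK : K = {y | (∀ p, 0 ≤ y p) ∧ ∀ θ, ∑ p, (if od p = θ then y p else 0) = d θ})
    (hKne : K.Nonempty)
    (x : (P → ℝ) → E → ℝ)
    (hx : ∀ y e, x y e = ∑ p, a e p * y p)
    (Φ : (P → ℝ) → ℝ)
    (hΦ : ∀ y, Φ y = ∑ e, ∫ z in (0:ℝ)..(x y e), c e z) :
    (∃ y ∈ K, ∀ y' ∈ K, Φ y ≤ Φ y') ∧
    (∀ y ∈ K, ∀ y' ∈ K, (∀ z ∈ K, Φ y ≤ Φ z) → (∀ z ∈ K, Φ y' ≤ Φ z) →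
      ∀ e, x y e = x y' e) := by
  -- the primitive of each edge cost
  set F : E → ℝ → ℝ := fun e z => ∫ t in (0:ℝ)..z, c e t with hFdef
  have hFcont : ∀ e, Continuous (F e) := fun e =>
    intervalIntegral.continuous_primitive (fun a b => (hc_cont e).intervalIntegrable a b) 0
  have hFderiv : ∀ e, deriv (F e) = c e := fun e =>
    funext fun b => Continuous.deriv_integral (c e) (hc_cont e) 0 b
  have hFconv : ∀ e, StrictConvexOn ℝ Set.univ (F e) := by
    intro e
    refine StrictMono.strictConvexOn_univ_of_deriv (hFcont e) ?_
    rw [hFderiv e]; exact hc_mono e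
  -- continuity of edge loads and of Φ
  have hxcont : ∀ e, Continuous fun y : P → ℝ => x y e := by
    intro e
    have h : (fun y : P → ℝ => x y e) = fun y => ∑ p, a e p * y p :=
      funext fun y => hx y e
    rw [h]
    exact continuous_finset_sum _ fun p _ => continuous_const.mul (continuous_apply p)
  have hΦeq : Φ = fun y => ∑ e, F e (x y e) := funext fun y => hΦ y
  have hΦcont : Continuous Φ := by
    rw [hΦeq]
    exact continuous_finset_sum _ fun e _ => (hFcont e).comp (hxcont e)
  -- K is compact
  have hKsub : K ⊆ Set.pi Set.univ fun p => Set.Icc 0 (d (od p)) := by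
    intro y hy p _
    rw [hK] at hy
    refine ⟨hy.1 p, ?_⟩
    calc y p = (if od p = od p then y p else 0) := by simp
      _ ≤ ∑ p', (if od p' = od p then y p' else 0) :=
        Finset.single_le_sum (f := fun p' => if od p' = od p then y p' else 0)
          (fun q _ => by by_cases h : od q = od p <;> simp [h, hy.1 q]) (mem_univ p)
      _ = d (od p) := hy.2 (od p)
  have hKclosed : IsClosed K := by
    rw [hK]
    have h1 : IsClosed {y : P → ℝ | ∀ p, 0 ≤ y p} := by
      have : {y : P → ℝ | ∀ p, 0 ≤ y p} = ⋂ p, {y | 0 ≤ y p} := by ext; simp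
      rw [this]
      exact isClosed_iInter fun p => isClosed_le continuous_const (continuous_apply p)
    have h2 : IsClosed {y : P → ℝ | ∀ θ, ∑ p, (if od p = θ then y p else 0) = d θ} := by
      have : {y : P → ℝ | ∀ θ, ∑ p, (if od p = θ then y p else 0) = d θ}
          = ⋂ θ, {y | ∑ p, (if od p = θ then y p else 0) = d θ} := by ext; simp
      rw [this]
      refine isClosed_iInter fun θ => isClosed_eq ?_ continuous_const
      refine continuous_finset_sum _ fun p _ => ?_
      by_cases h : od p = θ
      · simpa [h] using continuous_apply p
      · simp [h]; exact continuous_const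
    exact h1.inter h2
  have hKcomp : IsCompact K :=
    IsCompact.of_isClosed_subset (isCompact_univ_pi fun p => isCompact_Icc) hKclosed hKsub
  constructor
  · obtain ⟨y, hyK, hymin⟩ := hKcomp.exists_isMinOn hKne hΦcont.continuousOn
    exact ⟨y, hyK, fun y' hy' => hymin hy'⟩
  · intro y hy y' hy' hmin hmin' e
    by_contra hne
    set m : P → ℝ := fun p => (y p + y' p) / 2 with hm
    have hyK := hy; have hy'K := hy'
    rw [hK] at hyK hy'K
    have hmK : m ∈ K := by
      rw [hK]
      constructor
      · intro p
        have h1 := hyK.1 p; have h2 := hy'K.1 p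
        simp only [hm]; positivity
      · intro θ
        have hterm : ∀ p, (if od p = θ then m p else 0)
            = ((if od p = θ then y p else 0) + (if od p = θ then y' p else 0)) / 2 := by
          intro p; by_cases h : od p = θ <;> simp [h, hm]
        calc ∑ p, (if od p = θ then m p else 0)
            = ∑ p, ((if od p = θ then y p else 0) + (if od p = θ then y' p else 0)) / 2 :=
              Finset.sum_congr rfl fun p _ => hterm p
          _ = ((∑ p, (if od p = θ then y p else 0)) + ∑ p, (if od p = θ then y' p else 0)) / 2 := by
              rw [← Finset.sum_div, Finset.sum_add_distrib]
          _ = d θ := by rw [hyK.2 θ, hy'K.2 θ]; ring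
    have hxm : ∀ e', x m e' = (x y e' + x y' e') / 2 := by
      intro e'
      simp only [hx, hm]
      rw [← Finset.sum_add_distrib, Finset.sum_div]
      exact Finset.sum_congr rfl fun p _ => by ring
    have hΦyy' : Φ y = Φ y' := le_antisymm (hmin y' hy') (hmin' y hy)
    have hle : ∀ e' : E, F e' (x m e') ≤ (F e' (x y e') + F e' (x y' e')) / 2 := by
      intro e'
      by_cases h : x y e' = x y' e'
      · rw [hxm e', h]
        have : (x y' e' + x y' e') / 2 = x y' e' := by ring
        rw [this]; ring_nf; exact le_rfl
      · have := (hFconv e').2 (Set.mem_univ (x y e')) (Set.mem_univ (x y' e')) h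
          (by norm_num : (0:ℝ) < 1/2) (by norm_num : (0:ℝ) < 1/2) (by norm_num)
        rw [hxm e']
        calc F e' ((x y e' + x y' e') / 2)
            = F e' ((1/2 : ℝ) • x y e' + (1/2 : ℝ) • x y' e') := by
              rw [smul_eq_mul, smul_eq_mul]; ring_nf
          _ ≤ (1/2 : ℝ) • F e' (x y e') + (1/2 : ℝ) • F e' (x y' e') := le_of_lt this
          _ = (F e' (x y e') + F e' (x y' e')) / 2 := by
              rw [smul_eq_mul, smul_eq_mul]; ring
    have hlt : F e (x m e) < (F e (x y e) + F e (x y' e)) / 2 := by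
      have := (hFconv e).2 (Set.mem_univ (x y e)) (Set.mem_univ (x y' e)) hne
        (by norm_num : (0:ℝ) < 1/2) (by norm_num : (0:ℝ) < 1/2) (by norm_num)
      rw [hxm e]
      calc F e ((x y e + x y' e) / 2)
          = F e ((1/2 : ℝ) • x y e + (1/2 : ℝ) • x y' e) := by
            rw [smul_eq_mul, smul_eq_mul]; ring_nf
        _ < (1/2 : ℝ) • F e (x y e) + (1/2 : ℝ) • F e (x y' e) := this
        _ = (F e (x y e) + F e (x y' e)) / 2 := by rw [smul_eq_mul, smul_eq_mul]; ring
    have hsum : Φ m < Φ y := by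
      have h1 : Φ m < ∑ e', (F e' (x y e') + F e' (x y' e')) / 2 := by
        rw [hΦeq]
        exact Finset.sum_lt_sum (fun e' _ => hle e') ⟨e, mem_univ e, hlt⟩
      have h2 : ∑ e', (F e' (x y e') + F e' (x y' e')) / 2 = (Φ y + Φ y') / 2 := by
        rw [hΦeq, ← Finset.sum_div, Finset.sum_add_distrib]
      rw [h2, ← hΦyy'] at h1
      linarith
    exact absurd (hmin m hmK) (not_le.2 hsum)
end
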